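/- Let A = {1,…,n} with partition A₁,…,A_k (in increasing order) carrying a directed graph structure making it an n-partite tournament T. Define ψ(x) = (x, χ_x) where χ_x(y) = 1 if y < x and there is an edge from x to y in T, and 0 otherwise. Then ψ is an embedding of T into B: for x, y in different parts, there is an edge from x to y in T iff there is an edge from ψ(x) to ψ(y) in B. -/
import Mathlib


/-- Vertices of the EPPA-witness `B` for `n`-partite tournaments: pairs `(x, χ)` with
`x ∈ A` and `χ` a valuation function defined on the vertices outside the part of `x`. -/
abbrev NVert {A P : Type*} (part : A → P) :=
  Σ x : A, ({y : A // part y ≠ part x} → ZMod 2)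

/-- The edge relation of `B`: `(x,χ)` and `(x',χ')` in different parts are joined by an
edge oriented from `(x,χ)` to `(x',χ')` iff either `x > x'` and `χ(x') + χ'(x) = 1`, or
`x < x'` and `χ(x') + χ'(x) = 0`. -/
def NEdge {A P : Type*} [LinearOrder A] (part : A → P)
    (p q : NVert part) : Prop :=
  ∃ h : part p.1 ≠ part q.1,
    (q.1 < p.1 ∧ p.2 ⟨q.1, Ne.symm h⟩ + q.2 ⟨p.1, h⟩ = 1) ∨
    (p.1 < q.1 ∧ p.2 ⟨q.1, Ne.symm h⟩ + q.2 ⟨p.1, h⟩ = 0)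

/-- The embedding `ψ` of an `n`-partite tournament `T` (edge relation `ET` on `A` with
parts given by `part`) into `B`: `ψ(x) = (x, χ_x)` where `χ_x(y) = 1` if `y < x` and
there is an edge from `x` to `y` in `T`, and `0` otherwise. -/
def psiN {A P : Type*} [LinearOrder A] (part : A → P)
    (ET : A → A → Prop) [DecidableRel ET] (x : A) : NVert part :=
  ⟨x, fun y => if y.1 < x ∧ ET x y.1 then 1 else 0⟩

theorem stmt17 {A P : Type*} [LinearOrder A] [Fintype A] (part : A → P)
    (ET : A → A → Prop) [DecidableRel ET]
    (h_same : ∀ x y, part x = part y → ¬ ET x y)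
    (h_total : ∀ x y, part x ≠ part y → ET x y ∨ ET y x)
    (h_asymm : ∀ x y, ET x y → ¬ ET y x) :
    ∀ x y : A, part x ≠ part y →
      (ET x y ↔ NEdge part (psiN part ET x) (psiN part ET y)) := by
  intro x y hxy
  have hne : x ≠ y := fun h => hxy (congrArg part h)
  constructor
  · intro hET
    refine ⟨hxy, ?_⟩
    rcases lt_or_gt_of_ne hne with h | h
    · right
      refine ⟨h, ?_⟩
      simp only [psiN]
      rw [if_neg (fun hc => absurd h (not_lt_of_gt hc.1)),
          if_neg (fun hc => h_asymm _ _ hET hc.2)]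
      simp
    · left
      refine ⟨h, ?_⟩
      simp only [psiN]
      rw [if_pos ⟨h, hET⟩, if_neg (fun hc => absurd h (not_lt_of_gt hc.1))]
      simp
  · rintro ⟨h, ⟨hlt, hsum⟩ | ⟨hlt, hsum⟩⟩ <;>
      simp only [psiN] at hlt hsum <;> by_contra hnot
    · rw [if_neg (fun hc : y < x ∧ ET x y => hnot hc.2),
          if_neg (fun hc : x < y ∧ ET y x => absurd hlt (not_lt_of_gt hc.1))] at hsum
      simp at hsum
    · rw [if_neg (fun hc : y < x ∧ ET x y => absurd hlt (not_lt_of_gt hc.1)),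
          if_pos ⟨hlt, (h_total x y hxy).resolve_left hnot⟩] at hsum
      simp at hsum
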